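/- Let τ belong to class 𝒯 and let 𝒫^{(n)} = {(a_i^{(n)}, b_i^{(n)})}_{i=1}^∞ be the partition of [0,1] into branch intervals of τ^n. Then for every ε > 0 there exists n̄ ∈ ℕ such that for all n > n̄, sup_i (b_i^{(n)} − a_i^{(n)}) < ε. -/

import Mathlib

open Set Filter MeasureTheory Topology

structure PCT where
  τ : ℝ → ℝ
  a : ℕ → ℝ
  b : ℕ → ℝ
  da : ℕ → ℝ
  maps_to : Set.MapsTo τ (Set.Icc 0 1) (Set.Icc 0 1)
  lt : ∀ i, a i < b i
  sub : ∀ i, Set.Ioo (a i) (b i) ⊆ Set.Icc (0:ℝ) 1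
  disj : Pairwise (Function.onFun Disjoint fun i => Set.Ioo (a i) (b i))
  null : volume (Set.Icc (0:ℝ) 1 \ ⋃ i, Set.Ioo (a i) (b i)) = 0
  mono : ∀ i, StrictMonoOn τ (Set.Ioo (a i) (b i))
  conv : ∀ i, ConvexOn ℝ (Set.Ioo (a i) (b i)) τ
  diff : ∀ i, ∀ x ∈ Set.Ioo (a i) (b i), DifferentiableAt ℝ τ x
  lim_zero : ∀ i, Filter.Tendsto τ (nhdsWithin (a i) (Set.Ioi (a i))) (nhds 0)
  deriv_lim : ∀ i, Filter.Tendsto (deriv τ) (nhdsWithin (a i) (Set.Ioi (a i))) (nhds (da i))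
  da_pos : ∀ i, 0 < da i
  sum_inv : Summable (fun i => 1 / da i)
  expand : (¬ AccPt (0:ℝ) (Filter.principal (Set.range a))) → ∃ i, a i = 0 ∧ 1 < da i

namespace PCT

variable (T : PCT)

lemma a_nonneg (i : ℕ) : 0 ≤ T.a i := by
  by_contra h
  push_neg at h
  have h1 : T.a i < min (T.b i) 0 := lt_min (T.lt i) h
  set x := (T.a i + min (T.b i) 0) / 2 with hx
  have hx1 : T.a i < x := by simp only [hx]; linarith
  have hx2 : x < min (T.b i) 0 := by simp only [hx]; linarith
  have hmem : x ∈ Set.Ioo (T.a i) (T.b i) := ⟨hx1, hx2.trans_le (min_le_left _ _)⟩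
  have := (T.sub i hmem).1
  have := hx2.trans_le (min_le_right _ _)
  linarith

lemma a_lt_one (i : ℕ) : T.a i < 1 := by
  have hmem : (T.a i + T.b i) / 2 ∈ Set.Ioo (T.a i) (T.b i) := by
    constructor <;> · have := T.lt i; linarith
  have := (T.sub i hmem).2
  have := hmem.1
  linarith

/-- lower bound of `τ` on a branch: `τ x ≥ da i * (x - a i)`. -/
lemma tau_lower (i : ℕ) {x : ℝ} (hx : x ∈ Set.Ioo (T.a i) (T.b i)) :
    T.da i * (x - T.a i) ≤ T.τ x := by
  have hxa : T.a i < x := hx.1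
  have hEv : Set.Ioo (T.a i) x ∈ 𝓝[>] (T.a i) :=
    Ioo_mem_nhdsGT_of_mem ⟨le_refl _, hxa⟩
  have hslope : Tendsto (fun z => (T.τ x - T.τ z) / (x - z)) (𝓝[>] (T.a i))
      (𝓝 (T.τ x / (x - T.a i))) := by
    have h1 : Tendsto (fun z => T.τ x - T.τ z) (𝓝[>] (T.a i)) (𝓝 (T.τ x - 0)) :=
      tendsto_const_nhds.sub (T.lim_zero i)
    have h2 : Tendsto (fun z : ℝ => x - z) (𝓝[>] (T.a i)) (𝓝 (x - T.a i)) :=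
      tendsto_const_nhds.sub (tendsto_id.mono_left nhdsWithin_le_nhds)
    have := h1.div h2 (sub_ne_zero.2 hxa.ne'); rw [sub_zero] at this; exact this
  have key : T.da i ≤ T.τ x / (x - T.a i) := by
    refine le_of_tendsto_of_tendsto (T.deriv_lim i) hslope ?_
    filter_upwards [hEv] with z hz
    have hz' : z ∈ Set.Ioo (T.a i) (T.b i) := ⟨hz.1, hz.2.trans hx.2⟩
    have := (T.conv i).deriv_le_slope hz' hx hz.2 (T.diff i z hz')
    rwa [slope_def_field] at this
  rwa [le_div_iff₀ (by linarith)] at key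

/-- two-point convexity bounds on a branch. -/
lemma tau_bounds (i : ℕ) {x y : ℝ} (hx : x ∈ Set.Ioo (T.a i) (T.b i))
    (hy : y ∈ Set.Ioo (T.a i) (T.b i)) (hxy : x < y) :
    T.da i * (y - x) ≤ T.τ y - T.τ x ∧
      T.τ x * (y - x) ≤ (T.τ y - T.τ x) * (x - T.a i) := by
  have hxa : T.a i < x := hx.1
  have hEv : Set.Ioo (T.a i) x ∈ 𝓝[>] (T.a i) :=
    Ioo_mem_nhdsGT_of_mem ⟨le_refl _, hxa⟩
  have hslope : Tendsto (fun z => (T.τ x - T.τ z) / (x - z)) (𝓝[>] (T.a i))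
      (𝓝 (T.τ x / (x - T.a i))) := by
    have h1 : Tendsto (fun z => T.τ x - T.τ z) (𝓝[>] (T.a i)) (𝓝 (T.τ x - 0)) :=
      tendsto_const_nhds.sub (T.lim_zero i)
    have h2 : Tendsto (fun z : ℝ => x - z) (𝓝[>] (T.a i)) (𝓝 (x - T.a i)) :=
      tendsto_const_nhds.sub (tendsto_id.mono_left nhdsWithin_le_nhds)
    have := h1.div h2 (sub_ne_zero.2 hxa.ne'); rw [sub_zero] at this; exact this
  have key1 : T.da i ≤ T.τ x / (x - T.a i) := by
    refine le_of_tendsto_of_tendsto (T.deriv_lim i) hslope ?_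
    filter_upwards [hEv] with z hz
    have hz' : z ∈ Set.Ioo (T.a i) (T.b i) := ⟨hz.1, hz.2.trans hx.2⟩
    have := (T.conv i).deriv_le_slope hz' hx hz.2 (T.diff i z hz')
    rwa [slope_def_field] at this
  have key2 : T.τ x / (x - T.a i) ≤ (T.τ y - T.τ x) / (y - x) := by
    refine le_of_tendsto hslope ?_
    filter_upwards [hEv] with z hz
    have hz' : z ∈ Set.Ioo (T.a i) (T.b i) := ⟨hz.1, hz.2.trans hx.2⟩
    exact (T.conv i).slope_mono_adjacent hz' hy hz.2 hxy
  constructor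
  · have := key1.trans key2
    rwa [le_div_iff₀ (by linarith)] at this
  · rwa [div_le_div_iff₀ (by linarith) (by linarith)] at key2

end PCT
/-- The interval `(c,d)` follows a single sequence of branches under the first `n`
iterates of `τ`. -/
def IsBranchSeq (T : PCT) (n : ℕ) (c d : ℝ) : Prop :=
  c < d ∧ ∀ k < n, ∃ i, T.τ^[k] '' Set.Ioo c d ⊆ Set.Ioo (T.a i) (T.b i)

/-- `(c,d)` is a maximal open interval on which `τ^n` is a single monotone branch,
i.e. an element of the partition `𝒫⁽ⁿ⁾`. -/
def IsBranchInterval (T : PCT) (n : ℕ) (c d : ℝ) : Prop :=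
  IsBranchSeq T n c d ∧
    ∀ c' d', c' ≤ c → d ≤ d' → IsBranchSeq T n c' d' → c' = c ∧ d' = d
namespace PCT
variable (T : PCT)

lemma finite_small (c : ℝ) (hc : 0 < c) : {i : ℕ | T.da i < c}.Finite := by
  have h := T.sum_inv.tendsto_cofinite_zero
  have h2 : ∀ᶠ i in cofinite, (1 : ℝ) / T.da i < 1 / c :=
    h.eventually (gt_mem_nhds (by positivity))
  rw [eventually_cofinite] at h2
  refine h2.subset fun i hi => ?_
  simp only [Set.mem_setOf_eq, not_lt] at hi ⊢
  exact one_div_le_one_div_of_le (T.da_pos i) hi.le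

lemma exists_d0 : ∃ d0 : ℝ, 0 < d0 ∧ d0 ≤ 1 ∧ ∀ i, d0 ≤ T.da i := by
  classical
  set F := (T.finite_small 1 one_pos).toFinset with hF
  set S : Finset ℝ := insert (1 : ℝ) (F.image T.da) with hS
  have hSne : S.Nonempty := ⟨1, Finset.mem_insert_self _ _⟩
  refine ⟨S.min' hSne, ?_, ?_, ?_⟩
  · have := S.min'_mem hSne
    rcases Finset.mem_insert.1 this with h | h
    · rw [h]; exact one_pos
    · obtain ⟨i, _, hi⟩ := Finset.mem_image.1 h
      rw [← hi]; exact T.da_pos i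
  · exact S.min'_le 1 (Finset.mem_insert_self _ _)
  · intro i
    by_cases hi : T.da i < 1
    · refine S.min'_le _ (Finset.mem_insert_of_mem (Finset.mem_image_of_mem _ ?_))
      rw [hF, Set.Finite.mem_toFinset]; exact hi
    · exact (S.min'_le 1 (Finset.mem_insert_self _ _)).trans (not_lt.1 hi)

lemma zero_unique {i j : ℕ} (hi : T.a i = 0) (hj : T.a j = 0) : i = j := by
  by_contra hne
  have hd : Disjoint (Set.Ioo (T.a i) (T.b i)) (Set.Ioo (T.a j) (T.b j)) := T.disj hne
  have hbi : 0 < T.b i := hi ▸ T.lt i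
  have hbj : 0 < T.b j := hj ▸ T.lt j
  set x := min (T.b i) (T.b j) / 2 with hx
  have hx0 : 0 < x := by positivity
  have hxi : x ∈ Set.Ioo (T.a i) (T.b i) := by
    rw [hi]
    exact ⟨hx0, by rw [hx]; have := min_le_left (T.b i) (T.b j); linarith⟩
  have hxj : x ∈ Set.Ioo (T.a j) (T.b j) := by
    rw [hj]
    exact ⟨hx0, by rw [hx]; have := min_le_right (T.b i) (T.b j); linarith⟩
  exact Set.disjoint_left.1 hd hxi hxj

lemma exists_el : ∃ el : ℝ, 1 < el ∧ el ≤ 2 ∧ ∀ i, T.a i = 0 → el ≤ T.da i := by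
  by_cases hacc : AccPt (0 : ℝ) (Filter.principal (Set.range T.a))
  · refine ⟨2, one_lt_two, le_refl _, fun i hi => ?_⟩
    exfalso
    have hbpos : 0 < T.b i := hi ▸ T.lt i
    have hsep : ∀ j, j ≠ i → T.b i ≤ T.a j := by
      intro j hji
      by_contra hlt
      push_neg at hlt
      have hd : Disjoint (Set.Ioo (T.a j) (T.b j)) (Set.Ioo (T.a i) (T.b i)) := T.disj hji
      set x := (T.a j + min (T.b i) (T.b j)) / 2 with hx
      have h1 : T.a j < min (T.b i) (T.b j) := lt_min hlt (T.lt j)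
      have hxj : x ∈ Set.Ioo (T.a j) (T.b j) := by
        constructor
        · rw [hx]; linarith
        · rw [hx]; have := min_le_right (T.b i) (T.b j); linarith
      have hxi : x ∈ Set.Ioo (T.a i) (T.b i) := by
        rw [hi]
        constructor
        · have := T.a_nonneg j; rw [hx]; linarith
        · rw [hx]; have := min_le_left (T.b i) (T.b j); linarith
      exact Set.disjoint_left.1 hd hxj hxi
    rw [accPt_iff_nhds] at hacc
    obtain ⟨y, ⟨hyU, hyr⟩, hy0⟩ :=
      hacc (Set.Ioo (-T.b i) (T.b i)) (Ioo_mem_nhds (by linarith) hbpos)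
    obtain ⟨j, rfl⟩ := hyr
    have hji : j ≠ i := fun h => hy0 (by rw [h, hi])
    have := hsep j hji
    have := hyU.2
    linarith
  · obtain ⟨i0, hi0, hda⟩ := T.expand hacc
    refine ⟨min 2 ((1 + T.da i0) / 2), lt_min one_lt_two (by linarith), min_le_left _ _,
      fun i hi => ?_⟩
    have : i = i0 := T.zero_unique hi hi0
    subst this
    exact (min_le_right _ _).trans (by linarith)

lemma exists_el_m : ∃ el m : ℝ, 1 < el ∧ 0 < m ∧ m < 1 ∧
    ∀ i, T.da i < el → m ≤ T.a i := by
  classical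
  obtain ⟨el, hel1, hel2, hel0⟩ := T.exists_el
  have hfin : {i : ℕ | T.da i < el}.Finite :=
    (T.finite_small 2 two_pos).subset fun i hi => lt_of_lt_of_le hi hel2
  set F := hfin.toFinset with hF
  set S : Finset ℝ := insert (1 / 2 : ℝ) (F.image T.a) with hS
  have hSne : S.Nonempty := ⟨1 / 2, Finset.mem_insert_self _ _⟩
  refine ⟨el, S.min' hSne, hel1, ?_, ?_, ?_⟩
  · have := S.min'_mem hSne
    rcases Finset.mem_insert.1 this with h | h
    · rw [h]; norm_num
    · obtain ⟨i, hiF, hi⟩ := Finset.mem_image.1 h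
      rw [hF, Set.Finite.mem_toFinset] at hiF
      have h0 : T.a i ≠ 0 := by
        intro h0
        exact absurd hiF (not_lt.2 (hel0 i h0))
      rw [← hi]
      exact lt_of_le_of_ne (T.a_nonneg i) (Ne.symm h0)
  · calc S.min' hSne ≤ 1 / 2 := S.min'_le _ (Finset.mem_insert_self _ _)
      _ < 1 := by norm_num
  · intro i hi
    refine S.min'_le _ (Finset.mem_insert_of_mem (Finset.mem_image_of_mem _ ?_))
    rw [hF, Set.Finite.mem_toFinset]; exact hi

end PCT
/-- The purely combinatorial product estimate. -/
lemma comb_bound {d0 el m : ℝ} (N : ℕ) (hd0 : 0 < d0) (hd1 : d0 ≤ 1) (hel : 1 < el)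
    (hm0 : 0 < m) (hm1 : m < 1) (hN : 1 < (1 / (1 - m)) ^ N * d0)
    (n : ℕ) (s E : ℕ → ℝ)
    (hs : ∀ k ≤ n, 0 < s k ∧ s k ≤ 1)
    (hE : ∀ k < n, d0 ≤ E k ∧ ((el ≤ E k ∧ s (k + 1) / s k ≤ E k) ∨
        (m < s k ∧ (1 / (1 - m)) * (s (k + 1) / s k) ≤ E k))) :
    m ^ N * d0 ^ (N + 1) * (min el ((1 / (1 - m)) ^ N * d0)) ^ (n - 1) ≤
      (∏ k ∈ Finset.range n, E k) ^ (N + 1) := by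
  classical
  set κ : ℝ := 1 / (1 - m) with hκdef
  have hκ1 : 1 < κ := by
    rw [hκdef, lt_div_iff₀ (by linarith)]
    linarith
  set ν : ℝ := min el (κ ^ N * d0) with hν
  have hν1 : 1 < ν := lt_min hel hN
  have hν0 : 0 < ν := by linarith
  have hEpos : ∀ k < n, 0 < E k := fun k hk => lt_of_lt_of_le hd0 (hE k hk).1
  -- rewrite goal product
  rw [← Finset.prod_pow]
  -- single step estimate
  have hstep : ∀ k < n, ν * (s (k + 1) / s k) ^ N ≤ E k ^ (N + 1) := by
    intro k hk
    have hr0 : 0 ≤ s (k + 1) / s k :=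
      div_nonneg (hs (k + 1) (by omega)).1.le (hs k (by omega)).1.le
    obtain ⟨hEd, hcase⟩ := hE k hk
    have hEk := hEpos k hk
    rcases hcase with ⟨h1, h2⟩ | ⟨h1, h2⟩
    · calc ν * (s (k + 1) / s k) ^ N ≤ el * E k ^ N := by
            apply mul_le_mul (min_le_left _ _) (pow_le_pow_left₀ hr0 h2 N)
              (pow_nonneg hr0 N) (by linarith)
        _ ≤ E k * E k ^ N := mul_le_mul_of_nonneg_right h1 (pow_nonneg hEk.le N)
        _ = E k ^ (N + 1) := (pow_succ' _ _).symm
    · have hκ0 : (0:ℝ) ≤ κ := by linarith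
      calc ν * (s (k + 1) / s k) ^ N ≤ (κ ^ N * d0) * (s (k + 1) / s k) ^ N :=
            mul_le_mul_of_nonneg_right (min_le_right _ _) (pow_nonneg hr0 N)
        _ = d0 * (κ * (s (k + 1) / s k)) ^ N := by rw [mul_pow]; ring
        _ ≤ E k * E k ^ N := by
            apply mul_le_mul hEd (pow_le_pow_left₀ (by positivity) h2 N)
              (pow_nonneg (by positivity) N) hEk.le
        _ = E k ^ (N + 1) := (pow_succ' _ _).symm
  -- prefix estimate
  have hpre : ∀ j, j ≤ n → ν ^ j * (s j / s 0) ^ N ≤ ∏ k ∈ Finset.range j, E k ^ (N + 1) := by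
    intro j
    induction j with
    | zero => intro _; simp [div_self (ne_of_gt (hs 0 (Nat.zero_le n)).1)]
    | succ j ih =>
      intro hj
      have hj' : j ≤ n := by omega
      have ihj := ih hj'
      rw [Finset.prod_range_succ]
      have hs0 := (hs 0 (Nat.zero_le n)).1
      have hsj := (hs j hj').1
      have heq : ν ^ (j + 1) * (s (j + 1) / s 0) ^ N =
          (ν ^ j * (s j / s 0) ^ N) * (ν * (s (j + 1) / s j) ^ N) := by
        rw [pow_succ]
        rw [show s (j + 1) / s 0 = (s j / s 0) * (s (j + 1) / s j) by
          rw [div_mul_div_comm, mul_comm (s j) (s (j + 1)), mul_div_mul_right _ _ hsj.ne'],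
          mul_pow]
        ring
      rw [heq]
      exact mul_le_mul ihj (hstep j (by omega))
        (mul_nonneg hν0.le (pow_nonneg (div_nonneg (hs (j+1) (by omega)).1.le hsj.le) N))
        (Finset.prod_nonneg fun k hk => pow_nonneg (hEpos k (by
          have := Finset.mem_range.1 hk; omega)).le _)
  -- split at the last high point
  set P := (Finset.range (n + 1)).filter (fun k => m < s k) with hP
  by_cases hPne : P.Nonempty
  · set j := P.max' hPne with hj
    have hjmem : j ∈ P := P.max'_mem hPne
    have hjmem' := Finset.mem_filter.1 hjmem
    have hjn : j ≤ n := by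
      have := Finset.mem_range.1 hjmem'.1
      omega
    have hsj : m < s j := hjmem'.2
    have hgood : ∀ k, j < k → k < n → el ≤ E k := by
      intro k h1 h2
      have hk : ¬ m < s k := by
        intro hm
        have : k ∈ P := by
          rw [hP, Finset.mem_filter, Finset.mem_range]
          exact ⟨by omega, hm⟩
        have h2 := P.le_max' k this
        omega
      rcases (hE k h2).2 with ⟨h, _⟩ | ⟨h, _⟩
      · exact h
      · exact absurd h hk
    have hprefix : ν ^ j * m ^ N ≤ ∏ k ∈ Finset.range j, E k ^ (N + 1) := by
      refine le_trans ?_ (hpre j hjn)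
      have hs0 := hs 0 (Nat.zero_le n)
      have : m ≤ s j / s 0 := by
        have : s j ≤ s j / s 0 := by
          rw [le_div_iff₀ hs0.1]
          exact mul_le_of_le_one_right (hs j hjn).1.le hs0.2
        linarith
      exact mul_le_mul_of_nonneg_left (pow_le_pow_left₀ hm0.le this N)
        (pow_nonneg hν0.le j)
    rcases eq_or_lt_of_le hjn with hjeq | hjlt
    · -- j = n : the whole range is the prefix
      rw [← hjeq]
      calc m ^ N * d0 ^ (N + 1) * ν ^ (j - 1)
          ≤ m ^ N * 1 * ν ^ j := by
            apply mul_le_mul (mul_le_mul_of_nonneg_left (pow_le_one₀ hd0.le hd1)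
              (pow_nonneg hm0.le N)) (pow_le_pow_right₀ hν1.le (by omega))
              (pow_nonneg hν0.le _) (mul_nonneg (pow_nonneg hm0.le N) zero_le_one)
        _ = ν ^ j * m ^ N := by ring
        _ ≤ ∏ k ∈ Finset.range j, E k ^ (N + 1) := hprefix
    · -- j < n
      have hsplit : ∏ k ∈ Finset.range n, E k ^ (N + 1) =
          (∏ k ∈ Finset.range j, E k ^ (N + 1)) * ∏ k ∈ Finset.Ico j n, E k ^ (N + 1) := by
        rw [Finset.range_eq_Ico, ← Finset.prod_Ico_consecutive _ (Nat.zero_le j) hjn,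
          ← Finset.range_eq_Ico]
      have hmid : ∏ k ∈ Finset.Ico j n, E k ^ (N + 1) =
          E j ^ (N + 1) * ∏ k ∈ Finset.Ico (j + 1) n, E k ^ (N + 1) :=
        Finset.prod_eq_prod_Ico_succ_bot hjlt _
      have htail : ν ^ (n - (j + 1)) ≤ ∏ k ∈ Finset.Ico (j + 1) n, E k ^ (N + 1) := by
        calc ν ^ (n - (j + 1)) = ∏ _k ∈ Finset.Ico (j + 1) n, ν := by
              rw [Finset.prod_const, Nat.card_Ico]
          _ ≤ ∏ k ∈ Finset.Ico (j + 1) n, E k ^ (N + 1) := by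
              apply Finset.prod_le_prod (fun _ _ => hν0.le)
              intro k hk
              rw [Finset.mem_Ico] at hk
              have h1 : el ≤ E k := hgood k hk.1 hk.2
              have h2 : 1 ≤ E k := by linarith
              calc ν ≤ el := min_le_left _ _
                _ ≤ E k := h1
                _ ≤ E k ^ (N + 1) := le_self_pow₀ h2 (Nat.succ_ne_zero N)
      have hEjb : d0 ^ (N + 1) ≤ E j ^ (N + 1) :=
        pow_le_pow_left₀ hd0.le (hE j hjlt).1 _
      calc m ^ N * d0 ^ (N + 1) * ν ^ (n - 1)
          = (ν ^ j * m ^ N) * (d0 ^ (N + 1) * ν ^ (n - (j + 1))) := by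
            rw [show n - 1 = j + (n - (j + 1)) by omega, pow_add]
            ring
        _ ≤ (∏ k ∈ Finset.range j, E k ^ (N + 1)) *
              (E j ^ (N + 1) * ∏ k ∈ Finset.Ico (j + 1) n, E k ^ (N + 1)) := by
            apply mul_le_mul hprefix (mul_le_mul hEjb htail (pow_nonneg hν0.le _)
              (pow_nonneg (hEpos j hjlt).le _))
              (mul_nonneg (pow_nonneg hd0.le _) (pow_nonneg hν0.le _))
              (Finset.prod_nonneg fun k hk => pow_nonneg (hEpos k (by
                have := Finset.mem_range.1 hk; omega)).le _)
        _ = ∏ k ∈ Finset.range n, E k ^ (N + 1) := by rw [hsplit, hmid]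
  · -- no high point at all : every step is good
    have hlow : ∀ k ≤ n, s k ≤ m := by
      intro k hk
      by_contra h
      push_neg at h
      exact hPne ⟨k, by rw [hP, Finset.mem_filter, Finset.mem_range]; exact ⟨by omega, h⟩⟩
    have hallgood : ∀ k < n, el ≤ E k := by
      intro k hk
      rcases (hE k hk).2 with ⟨h, _⟩ | ⟨h, _⟩
      · exact h
      · exact absurd h (not_lt.2 (hlow k (by omega)))
    calc m ^ N * d0 ^ (N + 1) * ν ^ (n - 1)
        ≤ 1 * 1 * ν ^ n := by
          apply mul_le_mul (mul_le_mul (pow_le_one₀ hm0.le hm1.le)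
            (pow_le_one₀ hd0.le hd1) (by positivity) zero_le_one)
            (pow_le_pow_right₀ hν1.le (by omega)) (by positivity) (by norm_num)
      _ = ∏ _k ∈ Finset.range n, ν := by rw [Finset.prod_const, Finset.card_range, one_mul, one_mul]
      _ ≤ ∏ k ∈ Finset.range n, E k ^ (N + 1) := by
          apply Finset.prod_le_prod (fun _ _ => hν0.le)
          intro k hk
          rw [Finset.mem_range] at hk
          have h1 : el ≤ E k := hallgood k hk
          calc ν ≤ el := min_le_left _ _
            _ ≤ E k := h1
            _ ≤ E k ^ (N + 1) := le_self_pow₀ (by linarith) (Nat.succ_ne_zero N)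
namespace PCT

/-- Expansion estimate along a branch sequence. -/
lemma contract (T : PCT) {d0 el m : ℝ} {N : ℕ} (hd0 : 0 < d0) (hd1 : d0 ≤ 1)
    (hda : ∀ i, d0 ≤ T.da i) (hel : 1 < el) (hm0 : 0 < m) (hm1 : m < 1)
    (hbad : ∀ i, T.da i < el → m ≤ T.a i) (hN : 1 < (1 / (1 - m)) ^ N * d0)
    {n : ℕ} (hn : 1 ≤ n) {c d u v : ℝ} (hseq : IsBranchSeq T n c d)
    (hu : u ∈ Set.Ioo c d) (hv : v ∈ Set.Ioo c d) (huv : u < v) :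
    (v - u) ^ (N + 1) * (m ^ N * d0 ^ (N + 1) * (min el ((1 / (1 - m)) ^ N * d0)) ^ (n - 1))
      ≤ 1 := by
  classical
  -- the itinerary
  set ι : ℕ → ℕ := fun k => if h : k < n then (hseq.2 k h).choose else 0 with hι
  have hιs : ∀ k (hk : k < n),
      T.τ^[k] '' Set.Ioo c d ⊆ Set.Ioo (T.a (ι k)) (T.b (ι k)) := by
    intro k hk
    simp only [hι, dif_pos hk]
    exact (hseq.2 k hk).choose_spec
  set s : ℕ → ℝ := fun k => T.τ^[k] u with hsdef
  set t : ℕ → ℝ := fun k => T.τ^[k] v with htdef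
  have hsmem : ∀ k, k < n → s k ∈ Set.Ioo (T.a (ι k)) (T.b (ι k)) :=
    fun k hk => hιs k hk ⟨u, hu, rfl⟩
  have htmem : ∀ k, k < n → t k ∈ Set.Ioo (T.a (ι k)) (T.b (ι k)) :=
    fun k hk => hιs k hk ⟨v, hv, rfl⟩
  set E : ℕ → ℝ := fun k => max (T.da (ι k)) (T.τ (s k) / (s k - T.a (ι k))) with hE
  have hEpos : ∀ k, 0 < E k := fun k => lt_of_lt_of_le (T.da_pos (ι k)) (le_max_left _ _)
  have hssucc : ∀ k, s (k + 1) = T.τ (s k) := by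
    intro k; simp only [hsdef, Function.iterate_succ_apply']
  have htsucc : ∀ k, t (k + 1) = T.τ (t k) := by
    intro k; simp only [htdef, Function.iterate_succ_apply']
  -- growth of the gap
  have hgrow : ∀ k, k ≤ n → (v - u) * ∏ l ∈ Finset.range k, E l ≤ t k - s k := by
    intro k
    induction k with
    | zero => intro _; simp [hsdef, htdef]
    | succ k ih =>
      intro hk
      have hk' : k < n := by omega
      have ihk := ih (by omega)
      have hsk := hsmem k hk'
      have htk := htmem k hk'
      have hprodpos : (0:ℝ) < ∏ l ∈ Finset.range k, E l :=
        Finset.prod_pos fun l _ => hEpos l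
      have hst : s k < t k := by nlinarith [ihk]
      obtain ⟨hb1, hb2⟩ := T.tau_bounds (ι k) hsk htk hst
      have hsa : (0:ℝ) < s k - T.a (ι k) := by
        have := hsk.1; linarith
      have hEstep : E k * (t k - s k) ≤ T.τ (t k) - T.τ (s k) := by
        rw [hE]
        rw [max_mul_of_nonneg _ _ (by linarith : (0:ℝ) ≤ t k - s k)]
        apply max_le hb1
        rw [div_mul_eq_mul_div, div_le_iff₀ hsa]
        exact hb2
      calc (v - u) * ∏ l ∈ Finset.range (k + 1), E l
          = ((v - u) * ∏ l ∈ Finset.range k, E l) * E k := by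
            rw [Finset.prod_range_succ]; ring
        _ ≤ (t k - s k) * E k := mul_le_mul_of_nonneg_right ihk (hEpos k).le
        _ = E k * (t k - s k) := by ring
        _ ≤ T.τ (t k) - T.τ (s k) := hEstep
        _ = t (k + 1) - s (k + 1) := by rw [hssucc, htsucc]
  -- positivity and boundedness of the orbit
  have hiter : ∀ k, k < n → 0 < s k ∧ s k ≤ 1 := by
    intro k hk
    have h1 := hsmem k hk
    have h2 := T.sub (ι k) h1
    exact ⟨lt_of_le_of_lt (T.a_nonneg (ι k)) h1.1, h2.2⟩
  have hsb : ∀ k, k ≤ n → 0 < s k ∧ s k ≤ 1 := by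
    intro k hk
    rcases lt_or_eq_of_le hk with hk' | hk'
    · exact hiter k hk'
    · rw [hk']
      have hn1 : n - 1 < n := by omega
      have hmem := hsmem (n - 1) hn1
      have heq : s n = T.τ (s (n - 1)) := by
        rw [← hssucc (n - 1), show n - 1 + 1 = n by omega]
      constructor
      · rw [heq]
        have := T.tau_lower (ι (n - 1)) hmem
        have h1 := hmem.1
        have h2 := T.da_pos (ι (n - 1))
        nlinarith
      · rw [heq]
        exact (T.maps_to (T.sub _ hmem)).2
  -- hypotheses of the combinatorial bound
  have hτpos : ∀ k, k < n → 0 < T.τ (s k) := by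
    intro k hk
    have hmem := hsmem k hk
    have := T.tau_lower (ι k) hmem
    have h1 := hmem.1
    have h2 := T.da_pos (ι k)
    nlinarith
  have hEcomb : ∀ k, k < n → d0 ≤ E k ∧ ((el ≤ E k ∧ s (k + 1) / s k ≤ E k) ∨
      (m < s k ∧ (1 / (1 - m)) * (s (k + 1) / s k) ≤ E k)) := by
    intro k hk
    have hmem := hsmem k hk
    have hsa : (0:ℝ) < s k - T.a (ι k) := by have := hmem.1; linarith
    have hsk0 : 0 < s k := (hiter k hk).1
    have hsk1 : s k ≤ 1 := (hiter k hk).2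
    have hτ0 : 0 < T.τ (s k) := hτpos k hk
    have ha0 := T.a_nonneg (ι k)
    refine ⟨(hda (ι k)).trans (le_max_left _ _), ?_⟩
    by_cases hgood : el ≤ T.da (ι k)
    · left
      refine ⟨hgood.trans (le_max_left _ _), ?_⟩
      rw [hssucc]
      calc T.τ (s k) / s k ≤ T.τ (s k) / (s k - T.a (ι k)) := by
            apply div_le_div_of_nonneg_left hτ0.le hsa
            linarith
        _ ≤ E k := le_max_right _ _
    · right
      have hma : m ≤ T.a (ι k) := hbad (ι k) (not_le.1 hgood)
      refine ⟨lt_of_le_of_lt hma hmem.1, ?_⟩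
      rw [hssucc]
      have heq : (1 / (1 - m)) * (T.τ (s k) / s k) = T.τ (s k) / ((1 - m) * s k) := by
        field_simp
      rw [heq]
      calc T.τ (s k) / ((1 - m) * s k) ≤ T.τ (s k) / (s k - T.a (ι k)) := by
            apply div_le_div_of_nonneg_left hτ0.le hsa
            nlinarith
        _ ≤ E k := le_max_right _ _
  have hcomb := comb_bound N hd0 hd1 hel hm0 hm1 hN n s E hsb hEcomb
  -- the total gap is at most 1
  have huI : u ∈ Set.Icc (0:ℝ) 1 :=
    T.sub _ (hιs 0 (by omega) ⟨u, hu, rfl⟩)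
  have hvI : v ∈ Set.Icc (0:ℝ) 1 :=
    T.sub _ (hιs 0 (by omega) ⟨v, hv, rfl⟩)
  have hsnI : s n ∈ Set.Icc (0:ℝ) 1 := T.maps_to.iterate n huI
  have htnI : t n ∈ Set.Icc (0:ℝ) 1 := T.maps_to.iterate n hvI
  have hgap : (v - u) * ∏ l ∈ Finset.range n, E l ≤ 1 := by
    calc (v - u) * ∏ l ∈ Finset.range n, E l ≤ t n - s n := hgrow n (le_refl n)
      _ ≤ 1 := by have := htnI.2; have := hsnI.1; linarith
  have hprodpos : (0:ℝ) < ∏ l ∈ Finset.range n, E l := Finset.prod_pos fun l _ => hEpos l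
  calc (v - u) ^ (N + 1) * (m ^ N * d0 ^ (N + 1) * (min el ((1 / (1 - m)) ^ N * d0)) ^ (n - 1))
      ≤ (v - u) ^ (N + 1) * (∏ l ∈ Finset.range n, E l) ^ (N + 1) :=
        mul_le_mul_of_nonneg_left hcomb (pow_nonneg (by linarith) _)
    _ = ((v - u) * ∏ l ∈ Finset.range n, E l) ^ (N + 1) := (mul_pow _ _ _).symm
    _ ≤ 1 := pow_le_one₀ (mul_nonneg (by linarith) hprodpos.le) hgap

end PCT
/-- Proposition 2.1.9. Let `τ ∈ 𝒯` and let `𝒫⁽ⁿ⁾` be the partition of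
`[0,1]` into branch intervals `(aᵢ⁽ⁿ⁾, bᵢ⁽ⁿ⁾)` of `τⁿ`. Then for every `ε > 0` there is
`n̄ ∈ ℕ` such that for all `n > n̄` every branch interval of `τⁿ` has length `< ε`. -/
theorem branch_intervals_small (T : PCT) (ε : ℝ) (hε : 0 < ε) :
    ∃ nbar : ℕ, ∀ n > nbar, ∀ c d : ℝ, IsBranchInterval T n c d → d - c < ε := by
  classical
  obtain ⟨d0, hd0, hd1, hda⟩ := T.exists_d0
  obtain ⟨el, m, hel, hm0, hm1, hbad⟩ := T.exists_el_m
  have hκ1 : 1 < 1 / (1 - m) := by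
    rw [lt_div_iff₀ (by linarith)]; linarith
  obtain ⟨N, hNlt⟩ := pow_unbounded_of_one_lt (1 / d0) hκ1
  have hN : 1 < (1 / (1 - m)) ^ N * d0 := by
    rw [div_lt_iff₀ hd0] at hNlt
    linarith
  set ν : ℝ := min el ((1 / (1 - m)) ^ N * d0) with hν
  have hν1 : 1 < ν := lt_min hel hN
  set C : ℝ := m ^ N * d0 ^ (N + 1) with hC
  have hCpos : 0 < C := by positivity
  obtain ⟨K, hK⟩ := pow_unbounded_of_one_lt ((2 / ε) ^ (N + 1) / C) hν1
  refine ⟨K + 1, fun n hn c d hBI => ?_⟩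
  have hn1 : 1 ≤ n := by omega
  have hseq := hBI.1
  have hcd : c < d := hseq.1
  -- two interior points
  set u : ℝ := c + (d - c) / 4 with hu
  set v : ℝ := d - (d - c) / 4 with hv
  have huv : u < v := by rw [hu, hv]; linarith
  have huI : u ∈ Set.Ioo c d := by
    rw [hu]; exact ⟨by linarith, by linarith⟩
  have hvI : v ∈ Set.Ioo c d := by
    rw [hv]; exact ⟨by linarith, by linarith⟩
  have hkey := T.contract hd0 hd1 hda hel hm0 hm1 hbad hN hn1 hseq huI hvI huv
  -- the combinatorial bound is large
  have hbound : (2 / ε) ^ (N + 1) < C * ν ^ (n - 1) := by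
    rw [div_lt_iff₀ hCpos] at hK
    calc (2 / ε) ^ (N + 1) < C * ν ^ K := by linarith [hK]
      _ ≤ C * ν ^ (n - 1) :=
        mul_le_mul_of_nonneg_left (pow_le_pow_right₀ hν1.le (by omega)) hCpos.le
  -- conclude
  by_contra hcon
  push_neg at hcon
  have hvu : ε / 2 ≤ v - u := by rw [hu, hv]; linarith
  have h1 : (ε / 2) ^ (N + 1) * ((2 / ε) ^ (N + 1)) = 1 := by
    rw [← mul_pow]
    rw [show ε / 2 * (2 / ε) = 1 by field_simp]
    exact one_pow _
  have h2 : (ε / 2) ^ (N + 1) * (C * ν ^ (n - 1)) ≤ (v - u) ^ (N + 1) * (C * ν ^ (n - 1)) := by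
    apply mul_le_mul_of_nonneg_right (pow_le_pow_left₀ (by linarith) hvu _)
    have hν0 : (0:ℝ) < ν := by linarith
    positivity
  have h3 : (ε / 2) ^ (N + 1) * ((2 / ε) ^ (N + 1)) <
      (ε / 2) ^ (N + 1) * (C * ν ^ (n - 1)) := by
    apply mul_lt_mul_of_pos_left hbound
    positivity
  rw [h1] at h3
  rw [← hC, ← hν] at hkey
  linarith
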